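/- Let A be diagonalizable as A = C · diag(r e^{iθ}, e^{iφ}, r⁻¹ e^{iθ}) · C⁻¹ over ℍ with 0 < r < 1, θ, φ ∈ (0,π), and let A' = C · D · diag(r e^{iθ}, e^{iφ}, r⁻¹ e^{iθ}) · D⁻¹ · C⁻¹ where D = diag(q₁, q₃, q₂) with nonzero quaternions q₁, q₂, q₃. Then A = A' if and only if each qₘ lies in ℂ = ℝ + ℝi. -/

import Mathlib

open Quaternion Matrix

set_option maxHeartbeats 1000000

/-- The quaternion `e^{iθ} = cos θ + i sin θ`. -/
noncomputable def eI (θ : ℝ) : ℍ[ℝ] := ⟨Real.cos θ, Real.sin θ, 0, 0⟩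

/-- A quaternion lies in the copy of `ℂ = ℝ + ℝi`. -/
def inC (q : ℍ[ℝ]) : Prop := q.imJ = 0 ∧ q.imK = 0

lemma eI_re (θ : ℝ) : (eI θ).re = Real.cos θ := rfl
lemma eI_imI (θ : ℝ) : (eI θ).imI = Real.sin θ := rfl
lemma eI_imJ (θ : ℝ) : (eI θ).imJ = 0 := rfl
lemma eI_imK (θ : ℝ) : (eI θ).imK = 0 := rfl

lemma comm_iff (θ : ℝ) (hθ : Real.sin θ ≠ 0) (q : ℍ[ℝ]) : q * eI θ = eI θ * q ↔ inC q := by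
  rw [Quaternion.ext_iff]
  simp only [eI_re, eI_imI, eI_imJ, eI_imK, inC, Quaternion.re_mul, Quaternion.imI_mul, Quaternion.imJ_mul, Quaternion.imK_mul]
  constructor
  · rintro ⟨h1, h2, h3, h4⟩
    have hK : Real.sin θ * (2 * q.imK) = 0 := by linear_combination h3
    have hJ : Real.sin θ * (2 * q.imJ) = 0 := by linear_combination -h4
    have hK' := (mul_eq_zero.mp hK).resolve_left hθ
    have hJ' := (mul_eq_zero.mp hJ).resolve_left hθ
    constructor <;> linarith
  · rintro ⟨h1, h2⟩
    refine ⟨by ring, by ring, by rw [h1, h2]; ring, by rw [h1, h2]; ring⟩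

lemma conj_iff (θ t : ℝ) (ht : t ≠ 0) (hθ : Real.sin θ ≠ 0) (q : ℍ[ℝ]) (hq : q ≠ 0) :
    t • eI θ = q * (t • eI θ) * q⁻¹ ↔ inC q := by
  rw [← comm_iff θ hθ q]
  rw [mul_smul_comm, smul_mul_assoc, smul_right_injective _ ht |>.eq_iff]
  constructor
  · intro h
    have := congrArg (· * q) h
    simpa [mul_assoc, inv_mul_cancel₀ hq] using this.symm
  · intro h
    rw [h, mul_assoc, mul_inv_cancel₀ hq, mul_one]

/-- Let `A = C · diag(r e^{iθ}, e^{iφ}, r⁻¹ e^{iθ}) · C⁻¹` and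
`A' = C · D · diag(r e^{iθ}, e^{iφ}, r⁻¹ e^{iθ}) · D⁻¹ · C⁻¹` with
`D = diag(q₁,q₃,q₂)`, the `qₘ` nonzero.  Then `A = A'` iff each `qₘ ∈ ℂ`. -/
theorem conjugated_loxodromic_eq_iff_projective_points
    (r θ φ : ℝ) (hr0 : 0 < r) (hr1 : r < 1)
    (hθ : Real.sin θ ≠ 0) (hφ : Real.sin φ ≠ 0)
    (q1 q2 q3 : ℍ[ℝ]) (hq1 : q1 ≠ 0) (hq2 : q2 ≠ 0) (hq3 : q3 ≠ 0)
    (C : (Matrix (Fin 3) (Fin 3) ℍ[ℝ])ˣ) :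
    (C.val * Matrix.diagonal ![r • eI θ, eI φ, r⁻¹ • eI θ] * (C⁻¹).val =
      C.val *
        (Matrix.diagonal ![q1, q3, q2] *
          Matrix.diagonal ![r • eI θ, eI φ, r⁻¹ • eI θ] *
          Matrix.diagonal ![q1⁻¹, q3⁻¹, q2⁻¹]) * (C⁻¹).val) ↔
    (inC q1 ∧ inC q2 ∧ inC q3) := by
  have hr : r ≠ 0 := ne_of_gt hr0
  have hri : r⁻¹ ≠ 0 := inv_ne_zero hr
  rw [Units.mul_left_inj, Units.mul_right_inj,
    Matrix.diagonal_mul_diagonal, Matrix.diagonal_mul_diagonal,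
    (Matrix.diagonal_injective).eq_iff, funext_iff, Fin.forall_fin_succ,
    Fin.forall_fin_succ, Fin.forall_fin_succ]
  simp only [IsEmpty.forall_iff, and_true, Matrix.cons_val_zero, Matrix.cons_val_succ]
  rw [← conj_iff θ r hr hθ q1 hq1, ← conj_iff φ 1 one_ne_zero hφ q3 hq3,
    ← conj_iff θ r⁻¹ hri hθ q2 hq2]
  simp only [one_smul]
  tauto
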